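/- arXiv:1005.5223 — 8 statements merged into one kernel-verified Lean document; each statement's English description precedes it below -/
import Mathlib

section
/- In a connected graph G with a distinguished root r and a set B of faulty vertices with r ∉ B, the set of vertices v such that min_{b∈B} d(v,b) > d(r,v) induces a connected subgraph containing r (where d denotes graph distance). -/
namespace BFS

variable {V : Type*}

/-- Distance from a vertex to a set of vertices (min over the set). -/
noncomputable def distS (G : SimpleGraph V) (v : V) (S : Set V) : ℕ := sInf (G.dist v '' S)

/-- The predicate `I_d`: every vertex has level at least `min d (dist to B ∪ {r})`. -/
def IPred (G : SimpleGraph V) (r : V) (B : Set V) (d : ℕ) (ℓ : V → ℕ) : Prop :=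
  ∀ v, min d (distS G v (B ∪ {r})) ≤ ℓ v

/-- The containment area `S_B = {v | dist(v,B) ≤ d(v,r)}`. -/
def SB (G : SimpleGraph V) (r : V) (B : Set V) : Set V :=
  {v | ∃ b ∈ B, G.dist v b ≤ G.dist v r}

/-- The containment area `S_B* = {v | dist(v,B) < d(v,r)}`. -/
def SBstar (G : SimpleGraph V) (r : V) (B : Set V) : Set V :=
  {v | ∃ b ∈ B, G.dist v b < G.dist v r}

/-- A BFS path `w 0, …, w k`: starts at a vertex of `B ∪ {r}` with level `0` and no
parent, each vertex points to the previous one, levels increase by one, and the parent's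
level is minimal among the neighbours' levels. -/
def IsBFSPath (G : SimpleGraph V) (r : V) (B : Set V) (ℓ : V → ℕ)
    (prnt : V → Option V) (k : ℕ) (w : ℕ → V) : Prop :=
  1 ≤ k ∧ prnt (w 0) = none ∧ ℓ (w 0) = 0 ∧ w 0 ∈ B ∪ {r} ∧
  ∀ i, 1 ≤ i → i ≤ k →
    prnt (w i) = some (w (i - 1)) ∧ G.Adj (w (i - 1)) (w i) ∧
    ℓ (w i) = ℓ (w (i - 1)) + 1 ∧
    ℓ (w (i - 1)) = sInf (ℓ '' {u | G.Adj (w i) u})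

/-- The specification of BFS spanning tree construction. -/
def Spec (G : SimpleGraph V) (r : V) (B : Set V) (ℓ : V → ℕ)
    (prnt : V → Option V) (v : V) : Prop :=
  (v = r → prnt v = none ∧ ℓ v = 0) ∧
  (v ≠ r → ∃ k w, IsBFSPath G r B ℓ prnt k w ∧ w k = v)

end BFS

open BFS in
/-- In a connected graph `G` with root `r` and Byzantine set `B` with `r ∉ B`,
the set of vertices `v` with `min_{b ∈ B} d(v,b) > d(r,v)` (i.e. `V ∖ S_B*`)
induces a connected subgraph containing `r`. -/
theorem stmt0 {V : Type*} [Fintype V] (G : SimpleGraph V) (hG : G.Connected)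
    (r : V) (B : Set V) (hrB : r ∉ B) :
    r ∈ {v : V | ∀ b ∈ B, G.dist r v < G.dist v b} ∧
      (SimpleGraph.induce {v : V | ∀ b ∈ B, G.dist r v < G.dist v b} G).Connected := by
  set S : Set V := {v : V | ∀ b ∈ B, G.dist r v < G.dist v b} with hS
  have hrS : r ∈ S := by
    intro b hb
    have : r ≠ b := fun h => hrB (h ▸ hb)
    simpa [SimpleGraph.dist_self] using hG.pos_dist_of_ne this
  refine ⟨hrS, ?_⟩
  -- key: every v ∈ S is reachable from r in the induced graph
  have key : ∀ n : ℕ, ∀ v : V, (hv : v ∈ S) → G.dist r v = n →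
      (SimpleGraph.induce S G).Reachable ⟨r, hrS⟩ ⟨v, hv⟩ := by
    intro n
    induction n with
    | zero =>
      intro v hv hd
      have : r = v := hG.dist_eq_zero_iff.mp hd
      subst this
      exact SimpleGraph.Reachable.refl _
    | succ n ih =>
      intro v hv hd
      -- take a shortest walk from v to r
      obtain ⟨p, hp⟩ := (hG v r).exists_walk_length_eq_dist
      rw [SimpleGraph.dist_comm, hd] at hp
      cases p with
      | nil => simp at hp
      | cons hadj q =>
        rename_i u
        simp only [SimpleGraph.Walk.length_cons, Nat.add_right_cancel_iff] at hp
        -- u is the next vertex on a shortest path from v to r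
        have hdru_le : G.dist r u ≤ n := by
          rw [SimpleGraph.dist_comm]; exact hp ▸ SimpleGraph.dist_le q
        have hdrv_le : G.dist r v ≤ G.dist r u + 1 := by
          calc G.dist r v ≤ G.dist r u + G.dist u v := hG.dist_triangle
          _ ≤ G.dist r u + 1 := by
              have : G.dist u v ≤ 1 := by
                rw [SimpleGraph.dist_comm]
                exact le_of_eq (SimpleGraph.dist_eq_one_iff_adj.mpr hadj)
              omega
        have hdru : G.dist r u = n := by omega
        have huS : u ∈ S := by
          intro b hb
          have hvb := hv b hb
          have : G.dist v b ≤ G.dist v u + G.dist u b := hG.dist_triangle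
          have hvu : G.dist v u = 1 := SimpleGraph.dist_eq_one_iff_adj.mpr hadj
          omega
        have hreach := ih u huS hdru
        have hadj' : (SimpleGraph.induce S G).Adj ⟨u, huS⟩ ⟨v, hv⟩ := hadj.symm
        exact hreach.trans hadj'.reachable
  rw [SimpleGraph.connected_iff]
  refine ⟨?_, ⟨⟨r, hrS⟩⟩⟩
  rintro ⟨v, hv⟩ ⟨w, hw⟩
  exact ((key _ v hv rfl).symm.trans (key _ w hw rfl))
end

section
/- In a connected graph G with root r and Byzantine set B avoiding r, the set of vertices v satisfying min_{b∈B} d(v,b) ≥ d(r,v) induces a connected subgraph of G containing r. -/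
open BFS in
/-- In a connected graph `G` with root `r` and Byzantine set `B` avoiding `r`,
the set of vertices `v` with `min_{b ∈ B} d(v,b) ≥ d(r,v)` (i.e. `V ∖ S_B`)
induces a connected subgraph containing `r`. -/
theorem stmt1 {V : Type*} [Fintype V] (G : SimpleGraph V) (hG : G.Connected)
    (r : V) (B : Set V) (hrB : r ∉ B) :
    r ∈ {v : V | ∀ b ∈ B, G.dist r v ≤ G.dist v b} ∧
      (SimpleGraph.induce {v : V | ∀ b ∈ B, G.dist r v ≤ G.dist v b} G).Connected := by
  have hr : r ∈ {v : V | ∀ b ∈ B, G.dist r v ≤ G.dist v b} := by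
    intro b hb
    simp [SimpleGraph.dist_self]
  refine ⟨hr, ?_⟩
  set T := {v : V | ∀ b ∈ B, G.dist r v ≤ G.dist v b} with hT
  have key : ∀ n v (hv : v ∈ T), G.dist v r = n →
      (SimpleGraph.induce T G).Reachable ⟨v, hv⟩ ⟨r, hr⟩ := by
    intro n
    induction n using Nat.strong_induction_on with
    | _ n ih =>
      intro v hv hd
      rcases eq_or_ne v r with rfl | hvr
      · exact SimpleGraph.Reachable.refl _
      · obtain ⟨p, hp⟩ := (hG v r).exists_walk_length_eq_dist
        cases p with
        | nil => exact absurd rfl hvr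
        | @cons _ u _ h q =>
          have hdvr : 1 ≤ G.dist v r :=
            Nat.one_le_iff_ne_zero.mpr (by
              intro h0
              exact hvr ((hG v r).dist_eq_zero_iff.mp h0))
          have hq1 : G.dist u r ≤ G.dist v r - 1 := by
            have := SimpleGraph.dist_le q
            simp at hp
            omega
          have hq2 : G.dist v r - 1 ≤ G.dist u r := by
            have htri := hG.dist_triangle (u := v) (v := u) (w := r)
            have hadj : G.dist v u ≤ 1 := by
              have := SimpleGraph.dist_le h.toWalk
              simpa using this
            omega
          have hu : u ∈ T := by
            intro b hb
            have h1 : G.dist r v ≤ G.dist v b := hv b hb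
            have h2 : G.dist v b ≤ G.dist v u + G.dist u b := hG.dist_triangle
            have hadj : G.dist v u ≤ 1 := by
              have := SimpleGraph.dist_le h.toWalk
              simpa using this
            have hrv : G.dist r v = G.dist v r := SimpleGraph.dist_comm ..
            have hru : G.dist r u = G.dist u r := SimpleGraph.dist_comm ..
            omega
          have hrea : (SimpleGraph.induce T G).Reachable ⟨u, hu⟩ ⟨r, hr⟩ :=
            ih (G.dist u r) (by omega) u hu rfl
          exact (SimpleGraph.Adj.reachable (by exact h : (SimpleGraph.induce T G).Adj ⟨v, hv⟩ ⟨u, hu⟩)).trans hrea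
  rw [SimpleGraph.connected_iff]
  refine ⟨?_, ⟨⟨r, hr⟩⟩⟩
  intro a b
  exact (key _ a.1 a.2 rfl).trans (key _ b.1 b.2 rfl).symm
end

section
/- For any configuration assigning each vertex v a level ℓ(v) ∈ ℕ, and any d ∈ ℕ, the predicate I_d (every vertex v satisfies ℓ(v) ≥ min(d, dist(v, B ∪ {r}))) is preserved by one min+1 step: if a non-root correct vertex v updates ℓ(v) to 1 + min_{q ∈ N(v)} ℓ(q), and I_d held before, then I_d holds after the update. -/
open BFS in
/-- Closure of `I_d` under one `min+1` step: if a correct non-root vertex `v`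
updates its level to `1 + min_{q ∈ N(v)} ℓ(q)` (all other vertices unchanged) and
`I_d` held before, then `I_d` holds afterwards. -/
theorem stmt2 {V : Type*} [Fintype V] (G : SimpleGraph V) (hG : G.Connected)
    (r : V) (B : Set V) (hrB : r ∉ B) (d : ℕ) (ℓ ℓ' : V → ℕ)
    (v : V) (hvr : v ≠ r) (hvB : v ∉ B)
    (hupd : ℓ' v = 1 + sInf (ℓ '' {u | G.Adj v u}))
    (hoth : ∀ u, u ≠ v → ℓ' u = ℓ u)
    (hI : BFS.IPred G r B d ℓ) :
    BFS.IPred G r B d ℓ' := by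
  intro u
  by_cases hu : u = v
  · subst hu
    rw [hupd]
    -- u has a neighbor since G is connected and u ≠ r
    obtain ⟨p⟩ := hG u r
    have hne : ¬ p.Nil := by
      intro h
      exact hvr (SimpleGraph.Walk.Nil.eq h)
    have hadj : G.Adj u (p.getVert 1) := p.adj_snd hne
    have hNne : (ℓ '' {w | G.Adj u w}).Nonempty := ⟨ℓ (p.getVert 1), ⟨_, hadj, rfl⟩⟩
    obtain ⟨q, hq, hqinf⟩ := Nat.sInf_mem hNne
    -- q is a neighbor achieving the inf
    obtain ⟨b, hb, hbinf⟩ := Nat.sInf_mem (show (G.dist q '' (B ∪ {r})).Nonempty from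
      ⟨G.dist q r, r, Or.inr rfl, rfl⟩)
    have h1 : distS G u (B ∪ {r}) ≤ distS G q (B ∪ {r}) + 1 := by
      have hmem : G.dist u b ∈ G.dist u '' (B ∪ {r}) := ⟨b, hb, rfl⟩
      have h2 : distS G u (B ∪ {r}) ≤ G.dist u b := Nat.sInf_le hmem
      have h3 : G.dist u b ≤ G.dist u q + G.dist q b := hG.dist_triangle
      have h4 : G.dist u q = 1 := SimpleGraph.dist_eq_one_iff_adj.mpr hq
      unfold distS
      rw [hbinf] at h3
      unfold distS at h2
      omega
    have h5 : min d (distS G q (B ∪ {r})) ≤ ℓ q := hI q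
    unfold distS at *
    omega
  · rw [hoth u hu]
    exact hI u
end

section
/- In a configuration where parent pointers and levels form BFS paths for all vertices outside S_B (i.e., every v ∉ S_B ∪ {r} has a parent prnt(v) ∈ N(v) with ℓ(v) = ℓ(prnt(v)) + 1 and ℓ(prnt(v)) = min over neighbors of v, and the chain ends at r with ℓ(r)=0), every vertex v ∉ S_B satisfies ℓ(v) = d(v, r). -/
open BFS in
/-- If every vertex outside `S_B` satisfies the BFS specification (so parent
pointers and levels form BFS paths ending at `r`, with `ℓ(r) = 0`), and the levels
satisfy `I_D`, then every vertex `v ∉ S_B` satisfies `ℓ(v) = d(v,r)`. -/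
theorem stmt5 {V : Type*} [Fintype V] (G : SimpleGraph V) (hG : G.Connected)
    (r : V) (B : Set V) (hrB : r ∉ B) (D : ℕ) (hD : ∀ u w, G.dist u w ≤ D)
    (ℓ : V → ℕ) (prnt : V → Option V)
    (hI : BFS.IPred G r B D ℓ)
    (hspec : ∀ v, v ∉ BFS.SB G r B → BFS.Spec G r B ℓ prnt v) :
    ∀ v, v ∉ BFS.SB G r B → ℓ v = G.dist v r := by
  have key : ∀ n v, v ∉ BFS.SB G r B → G.dist v r = n → ℓ v = G.dist v r := by
    intro n
    induction n with
    | zero =>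
      intro v hv h0
      have hvr : v = r := (hG.dist_eq_zero_iff).mp h0
      subst hvr
      rw [h0]
      exact ((hspec v hv).1 rfl).2
    | succ n ih =>
      intro v hv hn
      have hvr : v ≠ r := by
        rintro rfl
        simp [SimpleGraph.dist_self] at hn
      -- lower bound : dist v r ≤ ℓ v
      have hlow : G.dist v r ≤ ℓ v := by
        refine le_trans ?_ (hI v)
        refine le_min (hD v r) ?_
        refine le_csInf ⟨G.dist v r, ⟨r, Or.inr rfl, rfl⟩⟩ ?_
        rintro m ⟨b, hb | hb, rfl⟩
        · by_contra hlt
          exact hv ⟨b, hb, le_of_lt (lt_of_not_ge hlt)⟩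
        · simp at hb; subst hb; exact le_rfl
      -- neighbor at distance n
      obtain ⟨p, hp⟩ := (hG v r).exists_walk_length_eq_dist
      obtain ⟨u, q, hadj, hu⟩ : ∃ u, ∃ q : G.Walk u r, G.Adj v u ∧ q.length = n := by
        cases p with
        | nil => exact absurd rfl hvr
        | cons h q =>
          exact ⟨_, q, h, by simpa [hn] using hp⟩
      have hur : G.dist u r = n := by
        have h1 : G.dist u r ≤ n := hu ▸ SimpleGraph.dist_le q
        have h2 : G.dist v r ≤ G.dist v u + G.dist u r := hG.dist_triangle
        have h3 : G.dist v u = 1 := SimpleGraph.dist_eq_one_iff_adj.mpr hadj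
        omega
      have huSB : u ∉ BFS.SB G r B := by
        rintro ⟨b, hb, hub⟩
        refine hv ⟨b, hb, ?_⟩
        have h2 : G.dist v b ≤ G.dist v u + G.dist u b := hG.dist_triangle
        have h3 : G.dist v u = 1 := SimpleGraph.dist_eq_one_iff_adj.mpr hadj
        omega
      have hu' : ℓ u = n := by rw [ih u huSB hur, hur]
      obtain ⟨k, w, ⟨hk1, _, _, _, hstep⟩, hwk⟩ := (hspec v hv).2 hvr
      obtain ⟨_, _, hℓ, hmin⟩ := hstep k hk1 le_rfl
      rw [hwk] at hℓ hmin
      have : sInf (ℓ '' {u | G.Adj v u}) ≤ ℓ u := Nat.sInf_le ⟨u, hadj, rfl⟩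
      omega
  intro v hv
  exact key (G.dist v r) v hv rfl
end

section
/- Under a fair scheduler, starting from any configuration, after at most D rounds of the induction the min+1 protocol reaches a configuration where every vertex v with dist(v, B∪{r}) ≥ d has level at least min(d, dist(v, B∪{r})); formally, for each d ≤ D, the predicate I_d is achieved in finite time and is closed thereafter. -/
namespace BFS

variable {V : Type*}

/-- A configuration: each vertex has a level and a parent pointer. -/
structure Config (V : Type*) where
  lvl : V → ℕ
  prnt : V → Option V

/-- The guard of the `min+1` protocol. The root is enabled when its output is not
`(⊥, 0)`; another process is enabled unless its parent is a neighbour with minimal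
level among the neighbours and its own level is the parent's level plus one. -/
def Enabled (G : SimpleGraph V) (r : V) (ρ : Config V) (v : V) : Prop :=
  (v = r → (ρ.prnt v ≠ none ∨ ρ.lvl v ≠ 0)) ∧
  (v ≠ r → ¬ ∃ u, ρ.prnt v = some u ∧ G.Adj v u ∧ ρ.lvl v = ρ.lvl u + 1 ∧
      ∀ q, G.Adj v q → ρ.lvl u ≤ ρ.lvl q)

/-- The set of neighbours of `v` with minimal level. -/
def minNbrs (G : SimpleGraph V) (ρ : Config V) (v : V) : Set V :=
  {q | G.Adj v q ∧ ∀ q', G.Adj v q' → ρ.lvl q ≤ ρ.lvl q'}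

/-- One step of the `min+1` protocol where the set `A` of processes is activated:
non-activated correct processes keep their state, the root resets its output, an
enabled activated correct process adopts some minimal-level neighbour as parent,
Byzantine processes behave arbitrarily. -/
def StepM (G : SimpleGraph V) (r : V) (B : Set V) (ρ ρ' : Config V) (A : Set V) : Prop :=
  ∀ v, v ∉ B →
    (v ∉ A → ρ'.lvl v = ρ.lvl v ∧ ρ'.prnt v = ρ.prnt v) ∧
    (v ∈ A →
      (v = r → ρ'.lvl v = 0 ∧ ρ'.prnt v = none) ∧
      (v ≠ r → (Enabled G r ρ v →
          ∃ p ∈ minNbrs G ρ v, ρ'.prnt v = some p ∧ ρ'.lvl v = ρ.lvl p + 1) ∧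
        (¬ Enabled G r ρ v → ρ'.lvl v = ρ.lvl v ∧ ρ'.prnt v = ρ.prnt v)))

/-- An execution of the `min+1` protocol along the schedule `A`. -/
def IsExecM (G : SimpleGraph V) (r : V) (B : Set V)
    (e : ℕ → Config V) (A : ℕ → Set V) : Prop :=
  ∀ n, StepM G r B (e n) (e (n + 1)) (A n)

/-- Fairness: a correct process that is infinitely often enabled is infinitely
often activated. -/
def Fair (G : SimpleGraph V) (r : V) (B : Set V)
    (e : ℕ → Config V) (A : ℕ → Set V) : Prop :=
  ∀ v, v ∉ B → (∀ n, ∃ m, n ≤ m ∧ Enabled G r (e m) v) → ∀ n, ∃ m, n ≤ m ∧ v ∈ A m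

/-- Round-robin choice: `p` is the next element of `A` (w.r.t. the numbering `num`)
strictly after index `c`, cyclically. -/
def IsChoice (num : V → ℕ) (c : ℕ) (A : Set V) (p : V) : Prop :=
  p ∈ A ∧
  ((∃ a ∈ A, c < num a) → (c < num p ∧ ∀ a ∈ A, c < num a → num p ≤ num a)) ∧
  ((∀ a ∈ A, num a ≤ c) → ∀ a ∈ A, num p ≤ num a)

/-- Index of the current parent of `v` (0 if it has no parent). -/
def currIdx (num : V → ℕ) (ρ : Config V) (v : V) : ℕ := (ρ.prnt v).elim 0 num

/-- One step of the `SSBFS` protocol (round-robin variant of `min+1`). -/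
def StepRR (G : SimpleGraph V) (r : V) (B : Set V) (num : V → ℕ)
    (ρ ρ' : Config V) (A : Set V) : Prop :=
  ∀ v, v ∉ B →
    (v ∉ A → ρ'.lvl v = ρ.lvl v ∧ ρ'.prnt v = ρ.prnt v) ∧
    (v ∈ A →
      (v = r → ρ'.lvl v = 0 ∧ ρ'.prnt v = none) ∧
      (v ≠ r → (Enabled G r ρ v →
          ∃ p, IsChoice num (currIdx num ρ v) (minNbrs G ρ v) p ∧
            ρ'.prnt v = some p ∧ ρ'.lvl v = ρ.lvl p + 1) ∧
        (¬ Enabled G r ρ v → ρ'.lvl v = ρ.lvl v ∧ ρ'.prnt v = ρ.prnt v)))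

/-- An execution of the `SSBFS` protocol along the schedule `A`. -/
def IsExecRR (G : SimpleGraph V) (r : V) (B : Set V) (num : V → ℕ)
    (e : ℕ → Config V) (A : ℕ → Set V) : Prop :=
  ∀ n, StepRR G r B num (e n) (e (n + 1)) (A n)

end BFS


section Aux
variable {V : Type*} (G : SimpleGraph V)

lemma distS_le {v b : V} {S : Set V} (hb : b ∈ S) : BFS.distS G v S ≤ G.dist v b :=
  Nat.sInf_le ⟨b, hb, rfl⟩

lemma distS_exists {v : V} {S : Set V} (hS : S.Nonempty) :
    ∃ b ∈ S, BFS.distS G v S = G.dist v b := by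
  have h : (G.dist v '' S).Nonempty := hS.image _
  obtain ⟨b, hb, h⟩ := Nat.sInf_mem h
  exact ⟨b, hb, h.symm⟩

lemma distS_adj (hG : G.Connected) {v q : V} (h : G.Adj v q) {S : Set V} (hS : S.Nonempty) :
    BFS.distS G v S ≤ BFS.distS G q S + 1 := by
  obtain ⟨b, hb, hq⟩ := distS_exists G (v := q) hS
  calc BFS.distS G v S ≤ G.dist v b := distS_le G hb
    _ ≤ G.dist v q + G.dist q b := hG.dist_triangle
    _ ≤ BFS.distS G q S + 1 := by
        rw [hq]; have h1 : G.dist v q = 1 := SimpleGraph.dist_eq_one_iff_adj.2 h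
        omega

lemma distS_mem_zero {v : V} {S : Set V} (hv : v ∈ S) : BFS.distS G v S = 0 := by
  have h := distS_le G (v := v) hv
  rw [SimpleGraph.dist_self] at h
  omega
end Aux


section Main
variable {V : Type*} {G : SimpleGraph V} {r : V} {B : Set V}

lemma hSne (r : V) (B : Set V) : (B ∪ {r} : Set V).Nonempty := ⟨r, Or.inr rfl⟩

lemma step_pres (hG : G.Connected) {d : ℕ} {ρ ρ' : BFS.Config V} {A : Set V}
    (hstep : BFS.StepM G r B ρ ρ' A) (hI : BFS.IPred G r B d ρ.lvl) (v : V)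
    (hv : min (d + 1) (BFS.distS G v (B ∪ {r})) ≤ ρ.lvl v ∨
      (v ∈ A ∧ BFS.Enabled G r ρ v)) :
    min (d + 1) (BFS.distS G v (B ∪ {r})) ≤ ρ'.lvl v := by
  by_cases hvB : v ∈ B
  · have h0 : BFS.distS G v (B ∪ {r}) = 0 := distS_mem_zero G (Or.inl hvB)
    omega
  by_cases hvr : v = r
  · have h0 : BFS.distS G v (B ∪ {r}) = 0 := distS_mem_zero G (Or.inr hvr)
    omega
  have hs := hstep v hvB
  by_cases hvA : v ∈ A
  · by_cases hen : BFS.Enabled G r ρ v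
    · obtain ⟨p, ⟨hadj, _⟩, _, hlvl⟩ := ((hs.2 hvA).2 hvr).1 hen
      have h1 : BFS.distS G v (B ∪ {r}) ≤ BFS.distS G p (B ∪ {r}) + 1 :=
        distS_adj G hG hadj (hSne r B)
      have h2 := hI p
      omega
    · have heq := (((hs.2 hvA).2 hvr).2 hen).1
      rcases hv with h | ⟨_, h⟩
      · omega
      · exact absurd h hen
  · have heq := (hs.1 hvA).1
    rcases hv with h | ⟨h, _⟩
    · omega
    · exact absurd h hvA

lemma enabled_of_low (hG : G.Connected) {d : ℕ} {ρ : BFS.Config V}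
    (hI : BFS.IPred G r B d ρ.lvl) {v : V}
    (hd : d + 1 ≤ BFS.distS G v (B ∪ {r})) (hlow : ρ.lvl v < d + 1) :
    BFS.Enabled G r ρ v := by
  constructor
  · intro hvr
    have h0 : BFS.distS G v (B ∪ {r}) = 0 := distS_mem_zero G (Or.inr hvr)
    omega
  · rintro hne ⟨u, hpr, hadj, hlv, hmin⟩
    have h1 : BFS.distS G v (B ∪ {r}) ≤ BFS.distS G u (B ∪ {r}) + 1 :=
      distS_adj G hG hadj (hSne r B)
    have h2 := hI u
    omega

end Main

open BFS in
/-- Convergence and closure of `I_d` for the `min+1` protocol: in any fair execution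
starting from any configuration, for every `d ≤ D` (`D` the diameter), a configuration
satisfying `I_d` is reached in finite time, and `I_d` is closed thereafter. -/
theorem stmt7 {V : Type*} [Fintype V] (G : SimpleGraph V) (hG : G.Connected)
    (r : V) (B : Set V) (hrB : r ∉ B) (D : ℕ) (hD : ∀ u w, G.dist u w ≤ D)
    (e : ℕ → BFS.Config V) (A : ℕ → Set V)
    (hexec : BFS.IsExecM G r B e A) (hfair : BFS.Fair G r B e A) :
    ∀ d ≤ D,
      (∃ n, BFS.IPred G r B d (e n).lvl) ∧
      (∀ n, BFS.IPred G r B d (e n).lvl → BFS.IPred G r B d (e (n + 1)).lvl) := by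
  have clos : ∀ d n, BFS.IPred G r B d (e n).lvl → BFS.IPred G r B d (e (n + 1)).lvl := by
    intro d n hI
    match d with
    | 0 => intro v; omega
    | d + 1 =>
      intro v
      have hI' : BFS.IPred G r B d (e n).lvl := fun u => by have := hI u; omega
      exact step_pres hG (hexec n) hI' v (Or.inl (hI v))
  have key : ∀ d, ∃ n, ∀ m, n ≤ m → BFS.IPred G r B d (e m).lvl := by
    intro d
    induction d with
    | zero => exact ⟨0, fun m _ v => by omega⟩
    | succ d ih =>
      obtain ⟨n₀, h₀⟩ := ih
      have hv : ∀ v : V, ∃ nv, n₀ ≤ nv ∧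
          ∀ m, nv ≤ m → min (d + 1) (BFS.distS G v (B ∪ {r})) ≤ (e m).lvl v := by
        intro v
        by_cases hle : BFS.distS G v (B ∪ {r}) ≤ d
        · exact ⟨n₀, le_rfl, fun m hm => by have := h₀ m hm v; omega⟩
        · have hd : d + 1 ≤ BFS.distS G v (B ∪ {r}) := by omega
          have hvB : v ∉ B := fun h => by
            have := distS_mem_zero G (S := B ∪ {r}) (Or.inl h); omega
          by_cases hex : ∃ m, n₀ ≤ m ∧ min (d + 1) (BFS.distS G v (B ∪ {r})) ≤ (e m).lvl v
          · obtain ⟨m₀, hm₀, hgood⟩ := hex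
            refine ⟨m₀, hm₀, ?_⟩
            intro m hm
            induction m, hm using Nat.le_induction with
            | base => exact hgood
            | succ m hm ihm =>
              exact step_pres hG (hexec m) (h₀ m (le_trans hm₀ hm)) v (Or.inl ihm)
          · push_neg at hex
            exfalso
            have hbad : ∀ m, n₀ ≤ m → (e m).lvl v < d + 1 := by
              intro m hm
              have := hex m hm
              omega
            have henab : ∀ m, n₀ ≤ m → BFS.Enabled G r (e m) v := fun m hm =>
              enabled_of_low hG (h₀ m hm) hd (hbad m hm)
            obtain ⟨m, hm, hA⟩ := hfair v hvB
              (fun n => ⟨max n n₀, le_max_left _ _, henab _ (le_max_right _ _)⟩) n₀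
            have := step_pres hG (hexec m) (h₀ m hm) v (Or.inr ⟨hA, henab m hm⟩)
            have := hbad (m + 1) (by omega)
            omega
      choose f hf1 hf2 using hv
      refine ⟨Finset.univ.sup f, fun m hm v => ?_⟩
      exact hf2 v m (le_trans (Finset.le_sup (Finset.mem_univ v)) hm)
  intro d _
  obtain ⟨n, hn⟩ := key d
  exact ⟨⟨n, hn n le_rfl⟩, clos d⟩
end

section
/- On the 6-vertex graph V = {r,u,u',v,v',b} with edges {r,u},{r,u'},{u,v},{u',v'},{v,b},{v',b}, given ℓ(r)=ℓ(b)=0, prnt(r)=prnt(b)=⊥, the unique configuration in which all of u, u', v, v' satisfy the BFS specification is prnt(u)=prnt(u')=r, prnt(v)=prnt(v')=b, with ℓ(u)=ℓ(u')=ℓ(v)=ℓ(v')=1. -/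
/-- The 6-vertex graph of the optimality proof: vertices `0 = r`, `1 = u`, `2 = u'`,
`3 = v`, `4 = v'`, `5 = b`, edges `{r,u},{r,u'},{u,v},{u',v'},{v,b},{v',b}`. -/
def G6 : SimpleGraph (Fin 6) :=
  SimpleGraph.fromRel (fun x y =>
    (x, y) ∈ ({(0, 1), (0, 2), (1, 3), (2, 4), (3, 5), (4, 5)} : Set (Fin 6 × Fin 6)))

open BFS

lemma adj1 : ∀ p, G6.Adj p 1 ↔ (p = 0 ∨ p = 3) := by
  intro p; fin_cases p <;> simp [G6, SimpleGraph.fromRel_adj, Prod.ext_iff]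
lemma adj2 : ∀ p, G6.Adj p 2 ↔ (p = 0 ∨ p = 4) := by
  intro p; fin_cases p <;> simp [G6, SimpleGraph.fromRel_adj, Prod.ext_iff]
lemma adj3 : ∀ p, G6.Adj p 3 ↔ (p = 1 ∨ p = 5) := by
  intro p; fin_cases p <;> simp [G6, SimpleGraph.fromRel_adj, Prod.ext_iff]
lemma adj4 : ∀ p, G6.Adj p 4 ↔ (p = 2 ∨ p = 5) := by
  intro p; fin_cases p <;> simp [G6, SimpleGraph.fromRel_adj, Prod.ext_iff]

/-- For a non-root vertex, Spec gives the data of the last step of a BFS path. -/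
lemma spec_last {ℓ : Fin 6 → ℕ} {prnt : Fin 6 → Option (Fin 6)} {x : Fin 6}
    (hx : x ≠ 0) (h : Spec G6 0 {5} ℓ prnt x) :
    ∃ p, prnt x = some p ∧ G6.Adj p x ∧ ℓ x = ℓ p + 1 ∧
      ℓ p = sInf (ℓ '' {u | G6.Adj x u}) := by
  obtain ⟨-, h2⟩ := h
  obtain ⟨k, w, ⟨hk, -, -, -, hstep⟩, hwk⟩ := h2 hx
  obtain ⟨h1, h2, h3, h4⟩ := hstep k hk le_rfl
  exact ⟨w (k - 1), by rw [← hwk]; exact h1, hwk ▸ h2, by rw [← hwk]; exact h3,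
    by rw [← hwk]; exact h4⟩

/-- A one-step BFS path witnesses the Spec. -/
lemma bfs_one {ℓ : Fin 6 → ℕ} {prnt : Fin 6 → Option (Fin 6)} {a x : Fin 6}
    (ha : prnt a = none) (hla : ℓ a = 0)
    (hmem : a ∈ ({5} : Set (Fin 6)) ∪ {0}) (hp : prnt x = some a) (hadj : G6.Adj a x)
    (hlx : ℓ x = 1) (hsinf : sInf (ℓ '' {u | G6.Adj x u}) = 0) (hne : x ≠ 0) :
    Spec G6 0 {5} ℓ prnt x := by
  refine ⟨fun h => absurd h hne, fun _ => ⟨1, fun i => if i = 0 then a else x, ?_, by norm_num⟩⟩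
  refine ⟨le_rfl, by simpa using ha, by simpa using hla, by simpa using hmem, ?_⟩
  intro i h1 h2
  have : i = 1 := le_antisymm h2 h1
  subst this
  norm_num
  exact ⟨hp, hadj, by omega, by omega⟩


open BFS in
/-- On the 6-vertex graph, given `ℓ(r) = ℓ(b) = 0` and `prnt(r) = prnt(b) = ⊥`, the
unique configuration in which all of `u`, `u'`, `v`, `v'` satisfy the BFS
specification is `prnt(u) = prnt(u') = r`, `prnt(v) = prnt(v') = b` and
`ℓ(u) = ℓ(u') = ℓ(v) = ℓ(v') = 1`. -/
theorem stmt15 (ℓ : Fin 6 → ℕ) (prnt : Fin 6 → Option (Fin 6))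
    (hr : prnt 0 = none ∧ ℓ 0 = 0) (hb : prnt 5 = none ∧ ℓ 5 = 0) :
    (∀ w ∈ ({1, 2, 3, 4} : Set (Fin 6)), BFS.Spec G6 0 {5} ℓ prnt w) ↔
      (prnt 1 = some 0 ∧ prnt 2 = some 0 ∧ prnt 3 = some 5 ∧ prnt 4 = some 5 ∧
        ℓ 1 = 1 ∧ ℓ 2 = 1 ∧ ℓ 3 = 1 ∧ ℓ 4 = 1) := by
  obtain ⟨hr1, hr2⟩ := hr
  obtain ⟨hb1, hb2⟩ := hb
  have si1 : sInf (ℓ '' {u | G6.Adj 1 u}) = 0 :=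
    Nat.sInf_eq_zero.mpr (Or.inl ⟨0, ((adj1 0).mpr (Or.inl rfl)).symm, hr2⟩)
  have si2 : sInf (ℓ '' {u | G6.Adj 2 u}) = 0 :=
    Nat.sInf_eq_zero.mpr (Or.inl ⟨0, ((adj2 0).mpr (Or.inl rfl)).symm, hr2⟩)
  have si3 : sInf (ℓ '' {u | G6.Adj 3 u}) = 0 :=
    Nat.sInf_eq_zero.mpr (Or.inl ⟨5, ((adj3 5).mpr (Or.inr rfl)).symm, hb2⟩)
  have si4 : sInf (ℓ '' {u | G6.Adj 4 u}) = 0 :=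
    Nat.sInf_eq_zero.mpr (Or.inl ⟨5, ((adj4 5).mpr (Or.inr rfl)).symm, hb2⟩)
  constructor
  · intro h
    obtain ⟨p1, hp1, ha1, hl1, hm1⟩ := spec_last (by decide) (h 1 (by simp))
    obtain ⟨p2, hp2, ha2, hl2, hm2⟩ := spec_last (by decide) (h 2 (by simp))
    obtain ⟨p3, hp3, ha3, hl3, hm3⟩ := spec_last (by decide) (h 3 (by simp))
    obtain ⟨p4, hp4, ha4, hl4, hm4⟩ := spec_last (by decide) (h 4 (by simp))
    rw [si1] at hm1; rw [si2] at hm2; rw [si3] at hm3; rw [si4] at hm4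
    have e1 : p1 = 0 := by
      rcases (adj1 p1).mp ha1 with h' | h'
      · exact h'
      · subst h'; omega
    have e2 : p2 = 0 := by
      rcases (adj2 p2).mp ha2 with h' | h'
      · exact h'
      · subst h'; omega
    have e3 : p3 = 5 := by
      rcases (adj3 p3).mp ha3 with h' | h'
      · subst h'; omega
      · exact h'
    have e4 : p4 = 5 := by
      rcases (adj4 p4).mp ha4 with h' | h'
      · subst h'; omega
      · exact h'
    subst e1; subst e2; subst e3; subst e4
    exact ⟨hp1, hp2, hp3, hp4, by omega, by omega, by omega, by omega⟩
  · rintro ⟨q1, q2, q3, q4, l1, l2, l3, l4⟩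
    intro w hw
    simp only [Set.mem_insert_iff, Set.mem_singleton_iff] at hw
    rcases hw with rfl | rfl | rfl | rfl
    · exact bfs_one hr1 hr2 (by simp) q1 ((adj1 0).mpr (Or.inl rfl)) l1 si1 (by decide)
    · exact bfs_one hr1 hr2 (by simp) q2 ((adj2 0).mpr (Or.inl rfl)) l2 si2 (by decide)
    · exact bfs_one hb1 hb2 (by simp) q3 ((adj3 5).mpr (Or.inr rfl)) l3 si3 (by decide)
    · exact bfs_one hb1 hb2 (by simp) q4 ((adj4 5).mpr (Or.inr rfl)) l4 si4 (by decide)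
end

section
/- If every vertex v of a finite connected graph with root r satisfies the BFS specification (with B = ∅, so the only BFS-path origin is r), then the parent pointers form a spanning tree rooted at r and ℓ(v) = d(v, r) for every v. -/
open BFS in
open BFS in
theorem extract_aux {V : Type*} (G : SimpleGraph V) (hG : G.Connected)
    (r : V) (ℓ : V → ℕ) (prnt : V → Option V)
    (hspec : ∀ v, BFS.Spec G r ∅ ℓ prnt v) (v : V) (hv : v ≠ r) :
    ∃ u, prnt v = some u ∧ G.Adj v u ∧ ℓ v = ℓ u + 1 ∧
      ℓ u = sInf (ℓ '' {x | G.Adj v x}) ∧ G.dist v r ≤ ℓ v := by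
  obtain ⟨k, w, ⟨hk, _, h0, hw0, hstep⟩, hwk⟩ := (hspec v).2 hv
  have hw0r : w 0 = r := by simpa using hw0
  have hlev : ∀ i ≤ k, ℓ (w i) = i ∧ G.dist (w i) r ≤ i := by
    intro i
    induction i with
    | zero =>
      intro _
      rw [hw0r] at h0 ⊢
      simp [h0, SimpleGraph.dist_self]
    | succ j ih =>
      intro hjk
      obtain ⟨_, hadj, hlvl, _⟩ := hstep (j+1) (Nat.le_add_left 1 j) hjk
      simp only [Nat.add_sub_cancel] at hadj hlvl
      obtain ⟨hl, hd⟩ := ih (Nat.le_of_succ_le hjk)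
      refine ⟨by rw [hlvl, hl], ?_⟩
      calc G.dist (w (j+1)) r ≤ G.dist (w (j+1)) (w j) + G.dist (w j) r :=
            hG.dist_triangle
        _ ≤ 1 + j := by
            refine Nat.add_le_add ?_ hd
            simpa using SimpleGraph.dist_le hadj.symm.toWalk
        _ = j + 1 := Nat.add_comm 1 j
  obtain ⟨hprnt, hadj, hlvl, hmin⟩ := hstep k hk le_rfl
  refine ⟨w (k-1), by rw [← hwk]; exact hprnt, by rw [← hwk]; exact hadj.symm,
    by rw [← hwk]; exact hlvl, by rw [← hwk]; exact hmin, ?_⟩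
  have := hlev k le_rfl
  rw [hwk] at this
  omega

open BFS in
/-- If every vertex of a finite connected graph with root `r` satisfies the BFS
specification with `B = ∅`, then `ℓ(v) = d(v,r)` for every `v`, and the parent
pointers form a spanning tree rooted at `r`: every vertex's parent chain follows
edges of the graph and reaches `r`. -/
theorem stmt16 {V : Type*} [Fintype V] (G : SimpleGraph V) (hG : G.Connected)
    (r : V) (ℓ : V → ℕ) (prnt : V → Option V)
    (hspec : ∀ v, BFS.Spec G r ∅ ℓ prnt v) :
    (∀ v, ℓ v = G.dist v r) ∧
    (∀ v, v ≠ r → ∃ u, prnt v = some u ∧ G.Adj v u) ∧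
    (∀ v, ∃ (k : ℕ) (w : ℕ → V), w 0 = v ∧ w k = r ∧
      ∀ i < k, prnt (w i) = some (w (i + 1)) ∧ G.Adj (w i) (w (i + 1))) := by
  have hr0 : ℓ r = 0 := ((hspec r).1 rfl).2
  -- upper bound: ℓ v ≤ dist v r, by strong induction on dist v r
  have hub : ∀ n, ∀ v, G.dist v r = n → ℓ v ≤ n := by
    intro n
    induction n using Nat.strong_induction_on with
    | _ n ih =>
      intro v hdist
      by_cases hv : v = r
      · subst hv; simp [hr0]
      · have hpos : 0 < G.dist v r := hG.pos_dist_of_ne hv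
        obtain ⟨p, hp⟩ := (hG v r).exists_walk_length_eq_dist
        cases p with
        | nil => exact absurd rfl hv
        | cons hadj q =>
          rename_i u
          have hq : q.length = G.dist v r - 1 := by
            simp only [SimpleGraph.Walk.length_cons] at hp; omega
          have hdu : G.dist u r ≤ n - 1 := by
            have := SimpleGraph.dist_le q
            omega
          have hlu : ℓ u ≤ n - 1 :=
            le_trans (ih _ (by omega) u rfl) hdu
          obtain ⟨p', _, _, hlvl, hmin, _⟩ := extract_aux G hG r ℓ prnt hspec v hv
          have : ℓ p' ≤ ℓ u := hmin ▸ Nat.sInf_le ⟨u, hadj, rfl⟩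
          omega
  have hle : ∀ v, ℓ v = G.dist v r := by
    intro v
    by_cases hv : v = r
    · subst hv; simp [hr0, SimpleGraph.dist_self]
    · obtain ⟨u, _, _, _, _, hd⟩ := extract_aux G hG r ℓ prnt hspec v hv
      exact le_antisymm (hub _ v rfl) hd
  refine ⟨hle, fun v hv => ?_, ?_⟩
  · obtain ⟨u, h1, h2, _⟩ := extract_aux G hG r ℓ prnt hspec v hv
    exact ⟨u, h1, h2⟩
  · -- chain to root, by strong induction on ℓ v
    have key : ∀ n, ∀ v, ℓ v = n → ∃ (k : ℕ) (w : ℕ → V), w 0 = v ∧ w k = r ∧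
        ∀ i < k, prnt (w i) = some (w (i + 1)) ∧ G.Adj (w i) (w (i + 1)) := by
      intro n
      induction n using Nat.strong_induction_on with
      | _ n ih =>
        intro v hn
        by_cases hv : v = r
        · exact ⟨0, fun _ => r, hv.symm, rfl, fun i hi => absurd hi (by omega)⟩
        · obtain ⟨u, hp, ha, hlvl, _, _⟩ := extract_aux G hG r ℓ prnt hspec v hv
          obtain ⟨m, w', hw0, hwm, hchain⟩ := ih (ℓ u) (by omega) u rfl
          refine ⟨m + 1, fun i => if i = 0 then v else w' (i - 1), by simp, by simp [hwm], ?_⟩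
          intro i hi
          rcases Nat.eq_zero_or_pos i with h0 | h0
          · subst h0; simpa [hw0] using ⟨hp, ha⟩
          · have : i - 1 < m := by omega
            have hc := hchain (i - 1) this
            have e1 : i - 1 + 1 = i := by omega
            rw [e1] at hc
            simpa [Nat.pos_iff_ne_zero.mp h0] using hc
    intro v
    exact key (ℓ v) v rfl
end

section
/- In any configuration where ℓ(v) = d(v,r) for all v ∉ S_B and every neighbor p of any such v satisfies ℓ(p) ≥ d(v,r) − 1, no vertex v ∉ S_B ∪ {r} with prnt(v) pointing to a neighbor u with ℓ(u) = d(v,r) − 1 = min over neighbors is enabled under the min+1 rule; hence vertices outside S_B never change output variables (the (S_B, n−1)-containment property). -/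
namespace BFS

variable {V : Type*}

section Aux
variable {V : Type*}

lemma distS_le {G : SimpleGraph V} {v b : V} {S : Set V} (hb : b ∈ S) :
    distS G v S ≤ G.dist v b := Nat.sInf_le ⟨b, hb, rfl⟩

lemma le_distS {G : SimpleGraph V} {v : V} {S : Set V} (hS : S.Nonempty) {c : ℕ}
    (h : ∀ b ∈ S, c ≤ G.dist v b) : c ≤ distS G v S :=
  le_csInf (hS.image _) (by rintro x ⟨b, hb, rfl⟩; exact h b hb)

lemma distS_exists {G : SimpleGraph V} {v : V} {S : Set V} (hS : S.Nonempty) :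
    ∃ b ∈ S, distS G v S = G.dist v b := by
  obtain ⟨b, hb, hb'⟩ := Nat.sInf_mem (hS.image (G.dist v))
  exact ⟨b, hb, hb'.symm⟩

end Aux

end BFS

open BFS in
/-- In a configuration where every `v ∉ S_B` has `ℓ(v) = d(v,r)`, every neighbour of
such a `v` has level at least `d(v,r) − 1`, the root outputs `(⊥,0)`, and each
non-root `v ∉ S_B` points to a neighbour of minimal level `d(v,r) − 1`, no vertex
outside `S_B` is enabled under the `min+1` rule; hence, in any execution from this
configuration satisfying `I_D`, vertices outside `S_B` never change their output
variables (the `(S_B, n−1)`-containment property). -/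
theorem stmt17 {V : Type*} [Fintype V] (G : SimpleGraph V) (hG : G.Connected)
    (r : V) (B : Set V) (hrB : r ∉ B) (D : ℕ) (hD : ∀ u w, G.dist u w ≤ D)
    (e : ℕ → BFS.Config V) (A : ℕ → Set V) (hexec : BFS.IsExecM G r B e A)
    (hlvl : ∀ v, v ∉ BFS.SB G r B → (e 0).lvl v = G.dist v r)
    (hnbr : ∀ v, v ∉ BFS.SB G r B → ∀ p, G.Adj v p → G.dist v r - 1 ≤ (e 0).lvl p)
    (hroot : (e 0).prnt r = none ∧ (e 0).lvl r = 0)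
    (hprnt : ∀ v, v ∉ BFS.SB G r B → v ≠ r → ∃ u, (e 0).prnt v = some u ∧
      G.Adj v u ∧ (e 0).lvl u = G.dist v r - 1 ∧
      ∀ q, G.Adj v q → (e 0).lvl u ≤ (e 0).lvl q)
    (hI : BFS.IPred G r B D (e 0).lvl) :
    (∀ v, v ∉ BFS.SB G r B → ¬ BFS.Enabled G r (e 0) v) ∧
    (∀ v, v ∉ BFS.SB G r B → ∀ n,
      (e n).lvl v = (e 0).lvl v ∧ (e n).prnt v = (e 0).prnt v) := by
  classical
  have hne1 : (B ∪ {r} : Set V).Nonempty := ⟨r, Set.mem_union_right _ rfl⟩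
  have hrS : r ∉ BFS.SB G r B := by
    rintro ⟨b, hb, hle⟩
    have h0 : G.dist r r = 0 := SimpleGraph.dist_self
    have : G.dist r b = 0 := by omega
    exact hrB (hG.dist_eq_zero_iff.mp this ▸ hb)
  have hnB : ∀ v, v ∉ BFS.SB G r B → v ∉ B := by
    intro v hv hvB
    exact hv ⟨v, hvB, by simp [SimpleGraph.dist_self]⟩
  have hpos : ∀ v, v ≠ r → 1 ≤ G.dist v r := fun v hv => hG.pos_dist_of_ne hv
  have hvb : ∀ v, v ∉ BFS.SB G r B → ∀ b ∈ B, G.dist v r + 1 ≤ G.dist v b := by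
    intro v hv b hb
    by_contra h
    exact hv ⟨b, hb, by omega⟩
  -- neighbour lower bound from IPred
  have hnb : ∀ (ℓ : V → ℕ), BFS.IPred G r B D ℓ → ∀ v, v ∉ BFS.SB G r B →
      ∀ q, G.Adj v q → G.dist v r - 1 ≤ ℓ q := by
    intro ℓ hIℓ v hv q hadj
    have h1 := hIℓ q
    have hvq : G.dist v q = 1 := SimpleGraph.dist_eq_one_iff_adj.mpr hadj
    have h2 : G.dist v r - 1 ≤ BFS.distS G q (B ∪ {r}) := by
      apply BFS.le_distS hne1
      rintro b (hb | hb)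
      · have := hvb v hv b hb
        have := hG.dist_triangle (u := v) (v := q) (w := b)
        omega
      · rcases hb with rfl
        have := hG.dist_triangle (u := v) (v := q) (w := b)
        omega
    have h3 := hD v r
    omega
  -- parent facts
  have hpar : ∀ v, v ∉ BFS.SB G r B → v ≠ r → ∃ u, (e 0).prnt v = some u ∧
      G.Adj v u ∧ u ∉ BFS.SB G r B ∧ (e 0).lvl u = G.dist v r - 1 := by
    intro v hv hvr
    obtain ⟨u, hpu, hadj, hlu, _⟩ := hprnt v hv hvr
    have hd := hpos v hvr
    have hvu : G.dist v u = 1 := SimpleGraph.dist_eq_one_iff_adj.mpr hadj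
    have hub : ∀ b ∈ B, G.dist v r ≤ G.dist u b := by
      intro b hb
      have := hvb v hv b hb
      have := hG.dist_triangle (u := v) (v := u) (w := b)
      omega
    have hur : G.dist u r ≤ G.dist v r - 1 := by
      by_contra h
      push_neg at h
      have h1 := hI u
      rw [hlu] at h1
      have h2 : G.dist v r ≤ BFS.distS G u (B ∪ {r}) := by
        apply BFS.le_distS hne1
        rintro b (hb | hb)
        · exact hub b hb
        · rcases hb with rfl; omega
      have h3 := hD v r
      omega
    have hus : u ∉ BFS.SB G r B := by
      rintro ⟨b, hb, hle⟩
      have := hub b hb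
      omega
    exact ⟨u, hpu, hadj, hus, hlu⟩
  -- IPred is preserved
  have hIn : ∀ n, BFS.IPred G r B D (e n).lvl := by
    intro n
    induction n with
    | zero => exact hI
    | succ n ih =>
      intro v
      by_cases hvB : v ∈ B
      · have h0 : BFS.distS G v (B ∪ {r}) ≤ 0 := by
          have := BFS.distS_le (G := G) (v := v) (S := B ∪ {r}) (Set.mem_union_left _ hvB)
          simpa [SimpleGraph.dist_self] using this
        omega
      · obtain ⟨hnotA, hA⟩ := hexec n v hvB
        by_cases hvA : v ∈ A n
        · obtain ⟨hr, hnr⟩ := hA hvA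
          by_cases hvr : v = r
          · obtain ⟨h1, _⟩ := hr hvr
            rw [h1]
            have h0 : BFS.distS G v (B ∪ {r}) ≤ 0 := by
              have := BFS.distS_le (G := G) (v := v)
                (Set.mem_union_right B (show r ∈ ({r} : Set V) from rfl))
              rw [hvr] at this ⊢
              simpa [SimpleGraph.dist_self] using this
            omega
          · obtain ⟨hen, hnen⟩ := hnr hvr
            by_cases hE : BFS.Enabled G r (e n) v
            · obtain ⟨p, ⟨hadj, _⟩, _, hlvl'⟩ := hen hE
              rw [hlvl']
              have h1 := ih p
              obtain ⟨b, hb, hbd⟩ := BFS.distS_exists (G := G) (v := p) hne1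
              have h2 : BFS.distS G v (B ∪ {r}) ≤ G.dist v b := BFS.distS_le hb
              have hvp : G.dist v p = 1 := SimpleGraph.dist_eq_one_iff_adj.mpr hadj
              have h3 := hG.dist_triangle (u := v) (v := p) (w := b)
              omega
            · rw [(hnen hE).1]; exact ih v
        · rw [(hnotA hvA).1]; exact ih v
  -- non-enabledness from agreement
  have hnen : ∀ (ρ : BFS.Config V), BFS.IPred G r B D ρ.lvl →
      (∀ w, w ∉ BFS.SB G r B → ρ.lvl w = (e 0).lvl w ∧ ρ.prnt w = (e 0).prnt w) →
      ∀ v, v ∉ BFS.SB G r B → ¬ BFS.Enabled G r ρ v := by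
    intro ρ hIρ hag v hv hE
    by_cases hvr : v = r
    · rcases hE.1 hvr with h | h
      · exact h ((hag v hv).2.trans (by rw [hvr]; exact hroot.1))
      · exact h ((hag v hv).1.trans (by rw [hvr]; exact hroot.2))
    · apply hE.2 hvr
      obtain ⟨u, hpu, hadj, hus, hlu⟩ := hpar v hv hvr
      have hd := hpos v hvr
      refine ⟨u, (hag v hv).2.trans hpu, hadj, ?_, ?_⟩
      · have h1 : ρ.lvl v = G.dist v r := (hag v hv).1.trans (hlvl v hv)
        have h2 : ρ.lvl u = G.dist v r - 1 := (hag u hus).1.trans hlu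
        omega
      · intro q hq
        have h2 : ρ.lvl u = G.dist v r - 1 := (hag u hus).1.trans hlu
        have := hnb ρ.lvl hIρ v hv q hq
        omega
  -- main induction
  have main : ∀ n, ∀ v, v ∉ BFS.SB G r B →
      (e n).lvl v = (e 0).lvl v ∧ (e n).prnt v = (e 0).prnt v := by
    intro n
    induction n with
    | zero => exact fun v _ => ⟨rfl, rfl⟩
    | succ n ih =>
      intro v hv
      have hvB := hnB v hv
      have hne := hnen (e n) (hIn n) (fun w hw => ih w hw) v hv
      obtain ⟨hnotA, hA⟩ := hexec n v hvB
      by_cases hvA : v ∈ A n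
      · obtain ⟨hr, hnr⟩ := hA hvA
        by_cases hvr : v = r
        · obtain ⟨h1, h2⟩ := hr hvr
          refine ⟨h1.trans ?_, h2.trans ?_⟩
          · rw [hvr]; exact hroot.2.symm
          · rw [hvr]; exact hroot.1.symm
        · obtain ⟨_, hnot⟩ := hnr hvr
          obtain ⟨h1, h2⟩ := hnot hne
          exact ⟨h1.trans (ih v hv).1, h2.trans (ih v hv).2⟩
      · obtain ⟨h1, h2⟩ := hnotA hvA
        exact ⟨h1.trans (ih v hv).1, h2.trans (ih v hv).2⟩
  exact ⟨hnen (e 0) hI (fun w _ => ⟨rfl, rfl⟩), fun v hv n => main n v hv⟩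
end
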